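/- Let G be a k-connected graph with δ(G) > (3/2)k − 1. Then either the whole vertex set V(G) is a (k+1)-block, or G has at least two distinct (k+1)-blocks, each of size at least δ(G) + 1. -/

import Mathlib

variable {V : Type*}

/-- `S` separates `u` from `v` in `G`: neither lies in `S` and every walk meets `S`. -/
def SepBy (G : SimpleGraph V) (S : Set V) (u v : V) : Prop :=
  u ∉ S ∧ v ∉ S ∧ ∀ p : G.Walk u v, ∃ w ∈ p.support, w ∈ S

/-- `X` is (≤k)-inseparable: no set of at most `k` vertices separates two of its vertices. -/
def Insep (G : SimpleGraph V) (k : ℕ) (X : Set V) : Prop :=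
  ∀ S : Finset V, S.card ≤ k → ∀ u ∈ X, ∀ v ∈ X, ¬ SepBy G (S : Set V) u v

/-- A `k`-block: a maximal (≤(k-1))-inseparable set of at least `k` vertices. -/
def IsBlockN (G : SimpleGraph V) (k : ℕ) (B : Set V) : Prop :=
  k ≤ B.ncard ∧ Insep G (k - 1) B ∧
    ∀ B' : Set V, B ⊆ B' → Insep G (k - 1) B' → B' = B

/-- `(A,B)` is a separation of `G`. -/
def IsSepn (G : SimpleGraph V) (A B : Set V) : Prop :=
  A ∪ B = Set.univ ∧ ∀ a ∈ A \ B, ∀ b ∈ B \ A, ¬ G.Adj a b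

/-- A separation is proper if neither side contains the other. -/
def ProperSep (A B : Set V) : Prop := ¬ A ⊆ B ∧ ¬ B ⊆ A

/-- `G` is `k`-connected. -/
def KConn (G : SimpleGraph V) [Fintype V] (k : ℕ) : Prop :=
  k < Fintype.card V ∧ ∀ S : Finset V, S.card < k → ∀ u v : V, ¬ SepBy G (S : Set V) u v

namespace BlockProof

open Set

variable {G : SimpleGraph V} {k : ℕ} {A B X Y W : Set V} {u v x y : V}

lemma sep_symm (h : IsSepn G A B) : IsSepn G B A :=
  ⟨by rw [Set.union_comm]; exact h.1, fun a ha b hb hadj => h.2 b hb a ha hadj.symm⟩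

lemma mem_of_cover (h : A ∪ B = Set.univ) (hx : x ∉ A) : x ∈ B := by
  have := (Set.mem_union x A B).mp (by rw [h]; trivial)
  tauto

lemma walk_meets (h : IsSepn G A B) :
    ∀ {a b : V} (p : G.Walk a b), a ∈ A → b ∉ A → ∃ w ∈ p.support, w ∈ A ∩ B := by
  intro a b p
  induction p with
  | nil => intro ha hb; exact absurd ha hb
  | @cons a x b hadj p ih =>
    intro ha hb
    by_cases hx : x ∈ A
    · obtain ⟨w, hw, hwAB⟩ := ih hx hb
      exact ⟨w, by simp [hw], hwAB⟩
    · by_cases haB : a ∈ B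
      · exact ⟨a, by simp, ha, haB⟩
      · exact absurd hadj (h.2 a ⟨ha, haB⟩ x ⟨mem_of_cover h.1 hx, hx⟩)

lemma sepBy_of_sep (hAB : IsSepn G A B) (ha : u ∈ A \ B) (hb : v ∈ B \ A) :
    SepBy G (A ∩ B) u v :=
  ⟨fun h => ha.2 h.2, fun h => hb.2 h.1, fun p => walk_meets hAB p ha.1 hb.2⟩

lemma order_ge [Fintype V] (hconn : KConn G k) (hAB : IsSepn G A B)
    (hC : (A \ B).Nonempty) (hD : (B \ A).Nonempty) : k ≤ (A ∩ B).ncard := by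
  classical
  by_contra h
  push_neg at h
  obtain ⟨a, ha⟩ := hC
  obtain ⟨b, hb⟩ := hD
  have hsb : SepBy G (A ∩ B) a b := sepBy_of_sep hAB ha hb
  have h2 := hconn.2 (A ∩ B).toFinset (by rwa [← Set.ncard_eq_toFinset_card']) a b
  rw [Set.coe_toFinset] at h2
  exact h2 hsb

lemma corner_sep (hAB : IsSepn G A B) (hXY : IsSepn G X Y) : IsSepn G (A ∩ X) (B ∪ Y) := by
  constructor
  · apply Set.eq_univ_of_forall
    intro z
    have h1 : z ∈ A ∪ B := by rw [hAB.1]; trivial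
    have h2 : z ∈ X ∪ Y := by rw [hXY.1]; trivial
    simp only [Set.mem_union, Set.mem_inter_iff] at *
    tauto
  · rintro a ⟨⟨haA, haX⟩, hnb⟩ b ⟨hbBY, hnab⟩
    simp only [Set.mem_union, not_or] at hnb
    by_cases hbA : b ∈ A
    · have hbX : b ∉ X := fun h => hnab ⟨hbA, h⟩
      exact hXY.2 a ⟨haX, hnb.2⟩ b ⟨mem_of_cover hXY.1 hbX, hbX⟩
    · exact hAB.2 a ⟨haA, hnb.1⟩ b ⟨mem_of_cover hAB.1 hbA, hbA⟩

lemma corner_id [Fintype V] (hAB : A ∪ B = Set.univ) (hXY : X ∪ Y = Set.univ) :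
    ((A ∩ X) ∩ (B ∪ Y)).ncard + ((A ∪ X) ∩ (B ∩ Y)).ncard
      = (A ∩ B).ncard + (X ∩ Y).ncard := by
  classical
  have hcover1 : ∀ z, z ∈ A ∨ z ∈ B := fun z => by
    have : z ∈ A ∪ B := by rw [hAB]; trivial
    tauto
  have hcover2 : ∀ z, z ∈ X ∨ z ∈ Y := fun z => by
    have : z ∈ X ∪ Y := by rw [hXY]; trivial
    tauto
  have e1 : (A ∩ X) ∩ (B ∪ Y) = (A ∩ B ∩ X) ∪ (A ∩ X ∩ Y) := by
    ext z; simp only [Set.mem_inter_iff, Set.mem_union]; tauto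
  have e2 : (A ∪ X) ∩ (B ∩ Y) = (A ∩ B ∩ Y) ∪ (B ∩ X ∩ Y) := by
    ext z; simp only [Set.mem_inter_iff, Set.mem_union]; tauto
  have e3 : A ∩ B = (A ∩ B ∩ X) ∪ (A ∩ B ∩ Y) := by
    ext z; simp only [Set.mem_inter_iff, Set.mem_union]
    constructor
    · intro hz; rcases hcover2 z with h | h <;> tauto
    · tauto
  have e4 : X ∩ Y = (A ∩ X ∩ Y) ∪ (B ∩ X ∩ Y) := by
    ext z; simp only [Set.mem_inter_iff, Set.mem_union]
    constructor
    · intro hz; rcases hcover1 z with h | h <;> tauto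
    · tauto
  have i1 : (A ∩ B ∩ X) ∩ (A ∩ X ∩ Y) = A ∩ B ∩ X ∩ Y := by
    ext z; simp only [Set.mem_inter_iff]; tauto
  have i2 : (A ∩ B ∩ Y) ∩ (B ∩ X ∩ Y) = A ∩ B ∩ X ∩ Y := by
    ext z; simp only [Set.mem_inter_iff]; tauto
  have i3 : (A ∩ B ∩ X) ∩ (A ∩ B ∩ Y) = A ∩ B ∩ X ∩ Y := by
    ext z; simp only [Set.mem_inter_iff]; tauto
  have i4 : (A ∩ X ∩ Y) ∩ (B ∩ X ∩ Y) = A ∩ B ∩ X ∩ Y := by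
    ext z; simp only [Set.mem_inter_iff]; tauto
  have n1 := Set.ncard_union_add_ncard_inter (A ∩ B ∩ X) (A ∩ X ∩ Y) (Set.toFinite _) (Set.toFinite _)
  have n2 := Set.ncard_union_add_ncard_inter (A ∩ B ∩ Y) (B ∩ X ∩ Y) (Set.toFinite _) (Set.toFinite _)
  have n3 := Set.ncard_union_add_ncard_inter (A ∩ B ∩ X) (A ∩ B ∩ Y) (Set.toFinite _) (Set.toFinite _)
  have n4 := Set.ncard_union_add_ncard_inter (A ∩ X ∩ Y) (B ∩ X ∩ Y) (Set.toFinite _) (Set.toFinite _)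
  rw [i1] at n1
  rw [i2] at n2
  rw [i3, ← e3] at n3
  rw [i4, ← e4] at n4
  rw [e1, e2]
  omega

lemma nbr_mem_left (h : IsSepn G A B) (hx : x ∈ A \ B) (hadj : G.Adj x y) : y ∈ A := by
  by_cases hyA : y ∈ A
  · exact hyA
  · exact absurd hadj (h.2 x hx y ⟨mem_of_cover h.1 hyA, hyA⟩)

lemma deg_bound [Fintype V] [Nonempty V] [DecidableRel G.Adj] {Z : Set V}
    (hx : x ∈ Z) (hN : ∀ y, G.Adj x y → y ∈ Z) : G.minDegree + 1 ≤ Z.ncard := by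
  classical
  have h1 : G.neighborFinset x ⊆ Z.toFinset.erase x := by
    intro y hy
    rw [SimpleGraph.mem_neighborFinset] at hy
    exact Finset.mem_erase.2 ⟨hy.ne', Set.mem_toFinset.2 (hN y hy)⟩
  have h2 := Finset.card_le_card h1
  rw [Finset.card_erase_of_mem (Set.mem_toFinset.2 hx)] at h2
  have h3 := G.minDegree_le_degree x
  rw [← SimpleGraph.card_neighborFinset_eq_degree] at h3
  have h4 : 1 ≤ Z.toFinset.card := Finset.card_pos.2 ⟨x, Set.mem_toFinset.2 hx⟩
  have h5 : Z.ncard = Z.toFinset.card := Set.ncard_eq_toFinset_card' Z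
  omega

lemma sep_of_sepBy {S : Finset V} (h : SepBy G (S : Set V) u v) :
    ∃ A B : Set V, IsSepn G A B ∧ u ∈ A \ B ∧ v ∈ B \ A ∧ A ∩ B ⊆ (S : Set V) := by
  classical
  set R : Set V := {z | ∃ p : G.Walk u z, ∀ w ∈ p.support, w ∉ (S : Set V)} with hR
  have hRS : ∀ z ∈ R, z ∉ (S : Set V) := by
    rintro z ⟨p, hp⟩
    exact hp z (SimpleGraph.Walk.end_mem_support p)
  have huR : u ∈ R := ⟨SimpleGraph.Walk.nil, by
    intro w hw
    rw [SimpleGraph.Walk.support_nil, List.mem_singleton] at hw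
    rw [hw]; exact h.1⟩
  have hvR : v ∉ R := by
    rintro ⟨p, hp⟩
    obtain ⟨w, hw, hwS⟩ := h.2.2 p
    exact hp w hw hwS
  refine ⟨R ∪ (S : Set V), Rᶜ, ⟨?_, ?_⟩, ⟨Or.inl huR, fun hc => hc huR⟩,
    ⟨hvR, ?_⟩, ?_⟩
  · apply Set.eq_univ_of_forall
    intro z
    by_cases hz : z ∈ R
    · exact Or.inl (Or.inl hz)
    · exact Or.inr hz
  · rintro a ha b hb hadj
    have haR : a ∈ R := by
      rcases ha.1 with h' | h'
      · exact h'
      · have haR' : a ∈ R := by simpa using ha.2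
        exact haR'
    have hbR : b ∈ R := by
      obtain ⟨p, hp⟩ := haR
      by_cases hbS : b ∈ (S : Set V)
      · exact absurd (Or.inr hbS) hb.2
      · refine ⟨p.concat hadj, ?_⟩
        intro w hw
        rw [SimpleGraph.Walk.support_concat, List.mem_append, List.mem_singleton] at hw
        rcases hw with hw | hw
        · exact hp w hw
        · rw [hw]; exact hbS
    exact hb.1 hbR
  · rintro (h' | h')
    · exact hvR h'
    · exact h.2.1 h'
  · rintro z ⟨hz1, hz2⟩
    rcases hz1 with h' | h'
    · exact absurd h' hz2
    · exact h'

lemma sep_nbr [Fintype V] (hconn : KConn G k) (hAB : IsSepn G A B)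
    (hC : (A \ B).Nonempty) (hD : (B \ A).Nonempty) (hord : (A ∩ B).ncard ≤ k)
    {s : V} (hs : s ∈ A ∩ B) : ∃ w ∈ A \ B, G.Adj s w := by
  classical
  by_contra hno
  push_neg at hno
  have hsep' : IsSepn G (A \ {s}) B := by
    constructor
    · apply Set.eq_univ_of_forall
      intro z
      by_cases hzB : z ∈ B
      · exact Or.inr hzB
      · exact Or.inl ⟨mem_of_cover (Set.union_comm A B ▸ hAB.1) hzB, by
          rintro rfl; exact hzB hs.2⟩
    · rintro a ⟨⟨haA, has⟩, haB⟩ b ⟨hbB, hbA⟩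
      by_cases hbA' : b ∈ A
      · have hbs : b = s := by
          by_contra hbs
          exact hbA ⟨hbA', by simpa using hbs⟩
        subst hbs
        intro hadj
        exact hno a ⟨haA, haB⟩ hadj.symm
      · exact hAB.2 a ⟨haA, haB⟩ b ⟨hbB, hbA'⟩
  have hne1 : ((A \ {s}) \ B).Nonempty := by
    obtain ⟨a, ha⟩ := hC
    exact ⟨a, ⟨ha.1, by rintro rfl; exact ha.2 hs.2⟩, ha.2⟩
  have hne2 : (B \ (A \ {s})).Nonempty := by
    obtain ⟨b, hb⟩ := hD
    exact ⟨b, hb.1, fun h' => hb.2 h'.1⟩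
  have hge := order_ge hconn hsep' hne1 hne2
  have heq : (A \ {s}) ∩ B = (A ∩ B) \ {s} := by
    ext z; simp only [Set.mem_inter_iff, Set.mem_diff]; tauto
  rw [heq, Set.ncard_diff_singleton_of_mem hs] at hge
  have h1 : 0 < (A ∩ B).ncard := (Set.ncard_pos (Set.toFinite _)).2 ⟨s, hs⟩
  omega

lemma insep_side [Fintype V] {a b : V} (hW : Insep G k W) (hXY : IsSepn G X Y)
    (hT : (X ∩ Y).ncard ≤ k) (ha : a ∈ W) (haX : a ∈ X \ Y) (hb : b ∈ W) (hbY : b ∈ Y \ X) :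
    False := by
  classical
  have h2 := hW (X ∩ Y).toFinset (by rwa [← Set.ncard_eq_toFinset_card']) a ha b hb
  rw [Set.coe_toFinset] at h2
  exact h2 (sepBy_of_sep hXY haX hbY)

section Helpers

variable [Fintype V] [Nonempty V] [DecidableRel G.Adj]

lemma H1 (hconn : KConn G k)
    (hAB : IsSepn G A B) (hSk : (A ∩ B).ncard = k)
    (hmin : ∀ X' Y' : Set V, IsSepn G X' Y' → (X' \ Y').Nonempty → (Y' \ X').Nonempty →
      (X' ∩ Y').ncard ≤ k → ((X' \ Y') ∩ W) = ∅ → (A \ B).ncard ≤ (X' \ Y').ncard)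
    (hdisj : (A \ B) ∩ W = ∅)
    (hXY : IsSepn G X Y) (hTk : (X ∩ Y).ncard = k)
    (hvA : v ∈ A) (hvY : v ∈ Y \ X) (huX : u ∈ X \ Y)
    (hQ1 : ((A \ B) ∩ (X \ Y)).Nonempty) (hQ4 : ((B \ A) ∩ (Y \ X)).Nonempty) : False := by
  classical
  have hP1 : IsSepn G (A ∩ X) (B ∪ Y) := corner_sep hAB hXY
  have hP1s : (A ∩ X) \ (B ∪ Y) = (A \ B) ∩ (X \ Y) := by
    ext z; simp only [Set.mem_diff, Set.mem_inter_iff, Set.mem_union, not_or]; tauto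
  have hP1b : v ∈ (B ∪ Y) \ (A ∩ X) := ⟨Or.inr hvY.1, fun hz => hvY.2 hz.2⟩
  have hP4 : IsSepn G (B ∩ Y) (A ∪ X) := corner_sep (sep_symm hAB) (sep_symm hXY)
  have hP4s : (B ∩ Y) \ (A ∪ X) = (B \ A) ∩ (Y \ X) := by
    ext z; simp only [Set.mem_diff, Set.mem_inter_iff, Set.mem_union, not_or]; tauto
  have hP4b : u ∈ (A ∪ X) \ (B ∩ Y) := ⟨Or.inr huX.1, fun hz => huX.2 hz.2⟩
  have h1 := order_ge hconn hP1 (by rw [hP1s]; exact hQ1) ⟨v, hP1b⟩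
  have h4 := order_ge hconn hP4 (by rw [hP4s]; exact hQ4) ⟨u, hP4b⟩
  have hid := corner_id hAB.1 hXY.1
  rw [Set.inter_comm (B ∩ Y) (A ∪ X)] at h4
  have hord1 : ((A ∩ X) ∩ (B ∪ Y)).ncard ≤ k := by omega
  have hminle := hmin (A ∩ X) (B ∪ Y) hP1 (by rw [hP1s]; exact hQ1) ⟨v, hP1b⟩ hord1
    (by rw [hP1s]
        apply Set.eq_empty_of_subset_empty
        rw [← hdisj]
        exact Set.inter_subset_inter_left W (Set.inter_subset_left))
  rw [hP1s] at hminle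
  have hCeq : (A \ B) ∩ (X \ Y) = A \ B :=
    Set.eq_of_subset_of_ncard_le Set.inter_subset_left hminle (Set.toFinite _)
  have hCsub : A \ B ⊆ X \ Y := by
    intro z hz
    rw [← hCeq] at hz
    exact hz.2
  have hvB : v ∈ B := by
    by_contra hvB
    exact hvY.2 (hCsub ⟨hvA, hvB⟩).1
  obtain ⟨w, hwC, hw⟩ := sep_nbr hconn hAB (hQ1.mono Set.inter_subset_left)
    (hQ4.mono Set.inter_subset_left) (le_of_eq hSk) ⟨hvA, hvB⟩
  have hwY : w ∈ Y := nbr_mem_left (sep_symm hXY) hvY hw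
  exact (hCsub hwC).2 hwY

lemma H4 (hconn : KConn G k) (hk : 3 * k ≤ 2 * G.minDegree + 1)
    (hAB : IsSepn G A B) (hSk : (A ∩ B).ncard = k)
    (hmin : ∀ X' Y' : Set V, IsSepn G X' Y' → (X' \ Y').Nonempty → (Y' \ X').Nonempty →
      (X' ∩ Y').ncard ≤ k → ((X' \ Y') ∩ W) = ∅ → (A \ B).ncard ≤ (X' \ Y').ncard)
    (hdisj : (A \ B) ∩ W = ∅) (hDne : (B \ A).Nonempty)
    (hXY : IsSepn G X Y) (hTk : (X ∩ Y).ncard = k)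
    (hvY : v ∈ Y \ X) (huX : u ∈ X \ Y)
    (hQ1 : ((A \ B) ∩ (X \ Y)).Nonempty) (hQ2 : ((A \ B) ∩ (Y \ X)).Nonempty)
    (hQ3 : (B \ A) ∩ (X \ Y) = ∅) (hQ4 : (B \ A) ∩ (Y \ X) = ∅) : False := by
  classical
  have hDsub : B \ A ⊆ X ∩ Y := by
    intro z hz
    have h3 : z ∉ X \ Y := fun h => (Set.eq_empty_iff_forall_notMem.1 hQ3 z) ⟨hz, h⟩
    have h4 : z ∉ Y \ X := fun h => (Set.eq_empty_iff_forall_notMem.1 hQ4 z) ⟨hz, h⟩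
    have h5 := (Set.mem_union z X Y).mp (by rw [hXY.1]; trivial)
    simp only [Set.mem_diff, not_and, not_not] at h3 h4
    rcases h5 with h | h
    · exact ⟨h, h3 h⟩
    · exact ⟨h4 h, h⟩
  obtain ⟨d, hd⟩ := hDne
  have hdegB : G.minDegree + 1 ≤ B.ncard :=
    deg_bound hd.1 (fun y hy => nbr_mem_left (sep_symm hAB) hd hy)
  have hBcard : (A ∩ B).ncard + (B \ A).ncard = B.ncard := by
    rw [Set.inter_comm]
    exact Set.ncard_inter_add_ncard_diff_eq_ncard B A (Set.toFinite _)
  -- corner P1 / P4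
  have hP1 : IsSepn G (A ∩ X) (B ∪ Y) := corner_sep hAB hXY
  have hP1s : (A ∩ X) \ (B ∪ Y) = (A \ B) ∩ (X \ Y) := by
    ext z; simp only [Set.mem_diff, Set.mem_inter_iff, Set.mem_union, not_or]; tauto
  have hP1b : v ∈ (B ∪ Y) \ (A ∩ X) := ⟨Or.inr hvY.1, fun hz => hvY.2 hz.2⟩
  have h1 := order_ge hconn hP1 (by rw [hP1s]; exact hQ1) ⟨v, hP1b⟩
  have hid1 := corner_id hAB.1 hXY.1
  -- corner P2 / P3
  have hYX : IsSepn G Y X := sep_symm hXY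
  have hP2 : IsSepn G (A ∩ Y) (B ∪ X) := corner_sep hAB hYX
  have hP2s : (A ∩ Y) \ (B ∪ X) = (A \ B) ∩ (Y \ X) := by
    ext z; simp only [Set.mem_diff, Set.mem_inter_iff, Set.mem_union, not_or]; tauto
  have hP2b : u ∈ (B ∪ X) \ (A ∩ Y) := ⟨Or.inr huX.1, fun hz => huX.2 hz.2⟩
  have h2 := order_ge hconn hP2 (by rw [hP2s]; exact hQ2) ⟨u, hP2b⟩
  have hid2 := corner_id hAB.1 hYX.1
  rw [Set.inter_comm Y X] at hid2
  -- branch on ord P1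
  by_cases hord1 : ((A ∩ X) ∩ (B ∪ Y)).ncard ≤ k
  · have hminle := hmin (A ∩ X) (B ∪ Y) hP1 (by rw [hP1s]; exact hQ1) ⟨v, hP1b⟩ hord1
      (by rw [hP1s]
          apply Set.eq_empty_of_subset_empty
          rw [← hdisj]
          exact Set.inter_subset_inter_left W Set.inter_subset_left)
    rw [hP1s] at hminle
    have hCeq : (A \ B) ∩ (X \ Y) = A \ B :=
      Set.eq_of_subset_of_ncard_le Set.inter_subset_left hminle (Set.toFinite _)
    obtain ⟨z, hz⟩ := hQ2
    have : z ∈ X \ Y := by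
      have : z ∈ (A \ B) ∩ (X \ Y) := by rw [hCeq]; exact hz.1
      exact this.2
    exact hz.2.2 this.1
  by_cases hord2 : ((A ∩ Y) ∩ (B ∪ X)).ncard ≤ k
  · have hminle := hmin (A ∩ Y) (B ∪ X) hP2 (by rw [hP2s]; exact hQ2) ⟨u, hP2b⟩ hord2
      (by rw [hP2s]
          apply Set.eq_empty_of_subset_empty
          rw [← hdisj]
          exact Set.inter_subset_inter_left W Set.inter_subset_left)
    rw [hP2s] at hminle
    have hCeq : (A \ B) ∩ (Y \ X) = A \ B :=
      Set.eq_of_subset_of_ncard_le Set.inter_subset_left hminle (Set.toFinite _)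
    obtain ⟨z, hz⟩ := hQ1
    have : z ∈ Y \ X := by
      have : z ∈ (A \ B) ∩ (Y \ X) := by rw [hCeq]; exact hz.1
      exact this.2
    exact hz.2.2 this.1
  -- both corner orders ≥ k+1, so opposite corners small
  push_neg at hord1 hord2
  have e4 : (A ∪ X) ∩ (B ∩ Y) = ((A ∩ B) ∩ Y) ∪ (B \ A) := by
    ext z
    simp only [Set.mem_inter_iff, Set.mem_union, Set.mem_diff]
    constructor
    · rintro ⟨h5, hzB, hzY⟩
      by_cases hzA : z ∈ A
      · exact Or.inl ⟨⟨hzA, hzB⟩, hzY⟩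
      · exact Or.inr ⟨hzB, hzA⟩
    · rintro (⟨⟨hzA, hzB⟩, hzY⟩ | hzD)
      · exact ⟨Or.inl hzA, hzB, hzY⟩
      · exact ⟨Or.inr (hDsub hzD).1, hzD.1, (hDsub hzD).2⟩
  have e3 : (A ∪ Y) ∩ (B ∩ X) = ((A ∩ B) ∩ X) ∪ (B \ A) := by
    ext z
    simp only [Set.mem_inter_iff, Set.mem_union, Set.mem_diff]
    constructor
    · rintro ⟨h5, hzB, hzX⟩
      by_cases hzA : z ∈ A
      · exact Or.inl ⟨⟨hzA, hzB⟩, hzX⟩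
      · exact Or.inr ⟨hzB, hzA⟩
    · rintro (⟨⟨hzA, hzB⟩, hzX⟩ | hzD)
      · exact ⟨Or.inl hzA, hzB, hzX⟩
      · exact ⟨Or.inr (hDsub hzD).2, hzD.1, (hDsub hzD).1⟩
  have n4 : ((A ∪ X) ∩ (B ∩ Y)).ncard = ((A ∩ B) ∩ Y).ncard + (B \ A).ncard := by
    rw [e4]
    exact Set.ncard_union_eq (by
      rw [Set.disjoint_left]
      rintro z ⟨⟨hzA, _⟩, _⟩ hzD
      exact hzD.2 hzA) (Set.toFinite _) (Set.toFinite _)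
  have n3 : ((A ∪ Y) ∩ (B ∩ X)).ncard = ((A ∩ B) ∩ X).ncard + (B \ A).ncard := by
    rw [e3]
    exact Set.ncard_union_eq (by
      rw [Set.disjoint_left]
      rintro z ⟨⟨hzA, _⟩, _⟩ hzD
      exact hzD.2 hzA) (Set.toFinite _) (Set.toFinite _)
  have nS : (A ∩ B).ncard ≤ ((A ∩ B) ∩ X).ncard + ((A ∩ B) ∩ Y).ncard := by
    have hu : A ∩ B = ((A ∩ B) ∩ X) ∪ ((A ∩ B) ∩ Y) := by
      ext z
      simp only [Set.mem_inter_iff, Set.mem_union]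
      constructor
      · intro hz
        rcases (Set.mem_union z X Y).mp (by rw [hXY.1]; trivial) with h | h <;> tauto
      · tauto
    calc (A ∩ B).ncard = (((A ∩ B) ∩ X) ∪ ((A ∩ B) ∩ Y)).ncard := by rw [← hu]
      _ ≤ _ := Set.ncard_union_le _ _
  omega

lemma H3 (hconn : KConn G k) (hk : 3 * k ≤ 2 * G.minDegree + 1)
    (hW : Insep G k W) (hWc : W.Nonempty → G.minDegree + 1 ≤ W.ncard)
    (hAB : IsSepn G A B) (hSk : (A ∩ B).ncard = k)
    (hmin : ∀ X' Y' : Set V, IsSepn G X' Y' → (X' \ Y').Nonempty → (Y' \ X').Nonempty →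
      (X' ∩ Y').ncard ≤ k → ((X' \ Y') ∩ W) = ∅ → (A \ B).ncard ≤ (X' \ Y').ncard)
    (hdisj : (A \ B) ∩ W = ∅) (hDne : (B \ A).Nonempty)
    (hXY : IsSepn G X Y) (hTk : (X ∩ Y).ncard = k)
    (hvA : v ∈ A) (hvY : v ∈ Y \ X) (huX : u ∈ X \ Y)
    (hQ1 : ((A \ B) ∩ (X \ Y)).Nonempty)
    (hQ2e : (A \ B) ∩ (Y \ X) = ∅) (hQ4e : (B \ A) ∩ (Y \ X) = ∅) : False := by
  classical
  have hDYsub : Y \ X ⊆ A ∩ B := by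
    intro z hz
    have h2 : z ∉ A \ B := fun h => (Set.eq_empty_iff_forall_notMem.1 hQ2e z) ⟨h, hz⟩
    have h4 : z ∉ B \ A := fun h => (Set.eq_empty_iff_forall_notMem.1 hQ4e z) ⟨h, hz⟩
    have h5 := (Set.mem_union z A B).mp (by rw [hAB.1]; trivial)
    simp only [Set.mem_diff, not_and, not_not] at h2 h4
    rcases h5 with h | h
    · exact ⟨h, h2 h⟩
    · exact ⟨h4 h, h⟩
  have hvS : v ∈ A ∩ B := hDYsub hvY
  have hNv : ∀ y, G.Adj v y → y ∈ Y := fun y hy => nbr_mem_left (sep_symm hXY) hvY hy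
  -- v has a neighbour w in A\B, necessarily in X ∩ Y
  obtain ⟨w, hwC, hw⟩ := sep_nbr hconn hAB (hQ1.mono Set.inter_subset_left) hDne
    (le_of_eq hSk) hvS
  have hwY : w ∈ Y := hNv w hw
  have hwX : w ∈ X := by
    by_contra hwX
    exact (hDYsub ⟨hwY, hwX⟩).2 |> hwC.2 |>.elim
  -- corner P1
  have hP1 : IsSepn G (A ∩ X) (B ∪ Y) := corner_sep hAB hXY
  have hP1s : (A ∩ X) \ (B ∪ Y) = (A \ B) ∩ (X \ Y) := by
    ext z; simp only [Set.mem_diff, Set.mem_inter_iff, Set.mem_union, not_or]; tauto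
  have hP1b : v ∈ (B ∪ Y) \ (A ∩ X) := ⟨Or.inr hvY.1, fun hz => hvY.2 hz.2⟩
  have h1 := order_ge hconn hP1 (by rw [hP1s]; exact hQ1) ⟨v, hP1b⟩
  have hid1 := corner_id hAB.1 hXY.1
  by_cases hord1 : ((A ∩ X) ∩ (B ∪ Y)).ncard ≤ k
  · have hminle := hmin (A ∩ X) (B ∪ Y) hP1 (by rw [hP1s]; exact hQ1) ⟨v, hP1b⟩ hord1
      (by rw [hP1s]
          apply Set.eq_empty_of_subset_empty
          rw [← hdisj]
          exact Set.inter_subset_inter_left W Set.inter_subset_left)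
    rw [hP1s] at hminle
    have hCeq : (A \ B) ∩ (X \ Y) = A \ B :=
      Set.eq_of_subset_of_ncard_le Set.inter_subset_left hminle (Set.toFinite _)
    have : w ∈ X \ Y := by
      have : w ∈ (A \ B) ∩ (X \ Y) := by rw [hCeq]; exact hwC
      exact this.2
    exact this.2 hwY
  push_neg at hord1
  have hsmall : ((A ∪ X) ∩ (B ∩ Y)).ncard + 1 ≤ k := by omega
  have e4 : (A ∪ X) ∩ (B ∩ Y) = B ∩ Y := by
    apply Set.inter_eq_self_of_subset_right
    rintro z ⟨hzB, hzY⟩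
    by_cases hzA : z ∈ A
    · exact Or.inl hzA
    · refine Or.inr ?_
      by_contra hzX
      exact (Set.eq_empty_iff_forall_notMem.1 hQ4e z) ⟨⟨hzB, hzA⟩, hzY, hzX⟩
  rw [e4] at hsmall
  have eBY : B ∩ Y = (Y \ X) ∪ (B ∩ (X ∩ Y)) := by
    ext z
    simp only [Set.mem_inter_iff, Set.mem_union, Set.mem_diff]
    constructor
    · rintro ⟨hzB, hzY⟩
      by_cases hzX : z ∈ X
      · exact Or.inr ⟨hzB, hzX, hzY⟩
      · exact Or.inl ⟨hzY, hzX⟩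
    · rintro (hz | hz)
      · exact ⟨(hDYsub hz).2, hz.1⟩
      · exact ⟨hz.1, hz.2.2⟩
  have nBY : (B ∩ Y).ncard = (Y \ X).ncard + (B ∩ (X ∩ Y)).ncard := by
    rw [eBY]
    exact Set.ncard_union_eq (by
      rw [Set.disjoint_left]
      rintro z hz1 hz2
      exact hz1.2 hz2.2.1) (Set.toFinite _) (Set.toFinite _)
  rw [nBY] at hsmall
  by_cases hWDY : W ∩ (Y \ X) = ∅
  · -- minimality applies to (Y,X)
    have hminle := hmin Y X (sep_symm hXY) ⟨v, hvY⟩ ⟨u, huX⟩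
      (by rw [Set.inter_comm]; exact le_of_eq hTk)
      (by rw [Set.inter_comm]; exact hWDY)
    -- degree bound at x ∈ Q1
    obtain ⟨x, hx⟩ := hQ1
    have hdegx : G.minDegree + 1 ≤ (A ∩ X).ncard :=
      deg_bound ⟨hx.1.1, hx.2.1⟩
        (fun y hy => ⟨nbr_mem_left hAB hx.1 hy, nbr_mem_left hXY hx.2 hy⟩)
    have hAX : (A ∩ X).ncard ≤ (A \ B).ncard + ((A ∩ B) ∩ X).ncard := by
      calc (A ∩ X).ncard ≤ ((A \ B) ∪ ((A ∩ B) ∩ X)).ncard := by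
            apply Set.ncard_le_ncard ?_ (Set.toFinite _)
            rintro z ⟨hzA, hzX⟩
            by_cases hzB : z ∈ B
            · exact Or.inr ⟨⟨hzA, hzB⟩, hzX⟩
            · exact Or.inl ⟨hzA, hzB⟩
        _ ≤ _ := Set.ncard_union_le _ _
    have hSX : ((A ∩ B) ∩ X).ncard + (Y \ X).ncard = k := by
      have hd : (A ∩ B) \ X = Y \ X := by
        ext z
        simp only [Set.mem_diff, Set.mem_inter_iff]
        constructor
        · rintro ⟨⟨hzA, hzB⟩, hzX⟩
          exact ⟨mem_of_cover hXY.1 hzX, hzX⟩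
        · intro hz
          exact ⟨hDYsub hz, hz.2⟩
      rw [← hd, ← hSk]
      exact Set.ncard_inter_add_ncard_diff_eq_ncard (A ∩ B) X (Set.toFinite _)
    omega
  · -- W meets Y \ X
    obtain ⟨b, hb⟩ := Set.nonempty_iff_ne_empty.2 hWDY
    have hWCX : W ∩ (X \ Y) = ∅ := by
      by_contra h
      obtain ⟨a, ha⟩ := Set.nonempty_iff_ne_empty.2 h
      exact insep_side hW hXY (le_of_eq hTk) ha.1 ha.2 hb.1 hb.2
    have hWcard := hWc ⟨b, hb.1⟩
    have hWsub : W.ncard ≤ (Y \ X).ncard + (W ∩ (X ∩ Y)).ncard := by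
      calc W.ncard ≤ ((Y \ X) ∪ (W ∩ (X ∩ Y))).ncard := by
            apply Set.ncard_le_ncard ?_ (Set.toFinite _)
            intro z hz
            have hzXY := (Set.mem_union z X Y).mp (by rw [hXY.1]; trivial)
            by_cases hzX : z ∈ X
            · have hzY : z ∈ Y := by
                by_contra hzY
                exact (Set.eq_empty_iff_forall_notMem.1 hWCX z) ⟨hz, hzX, hzY⟩
              exact Or.inr ⟨hz, hzX, hzY⟩
            · rcases hzXY with h | h
              · exact absurd h hzX
              · exact Or.inl ⟨h, hzX⟩
        _ ≤ _ := Set.ncard_union_le _ _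
    have hgam : ((A \ B) ∩ (X ∩ Y)).ncard + (W ∩ (X ∩ Y)).ncard ≤ k := by
      rw [← hTk]
      calc ((A \ B) ∩ (X ∩ Y)).ncard + (W ∩ (X ∩ Y)).ncard
          = (((A \ B) ∩ (X ∩ Y)) ∪ (W ∩ (X ∩ Y))).ncard := by
            refine (Set.ncard_union_eq ?_ (Set.toFinite _) (Set.toFinite _)).symm
            rw [Set.disjoint_left]
            rintro z hz1 hz2
            exact (Set.eq_empty_iff_forall_notMem.1 hdisj z) ⟨hz1.1, hz2.1⟩
        _ ≤ (X ∩ Y).ncard := Set.ncard_le_ncard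
            (by rintro z (hz | hz) <;> exact hz.2) (Set.toFinite _)
    have hgamlow : G.minDegree + 1 ≤ (Y \ X).ncard + ((A \ B) ∩ (X ∩ Y)).ncard
        + (B ∩ (X ∩ Y)).ncard := by
      have hdeg : G.minDegree + 1 ≤
          ((Y \ X) ∪ (((A \ B) ∩ (X ∩ Y)) ∪ (B ∩ (X ∩ Y)))).ncard := by
        apply deg_bound (Set.mem_union_left _ hvY)
        intro y hy
        simp only [Set.mem_union]
        have hyY : y ∈ Y := hNv y hy
        by_cases hyX : y ∈ X
        · by_cases hyB : y ∈ B
          · exact Or.inr (Or.inr ⟨hyB, hyX, hyY⟩)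
          · exact Or.inr (Or.inl ⟨⟨mem_of_cover (Set.union_comm A B ▸ hAB.1) hyB, hyB⟩,
              hyX, hyY⟩)
        · exact Or.inl ⟨hyY, hyX⟩
      calc G.minDegree + 1 ≤ _ := hdeg
        _ ≤ (Y \ X).ncard + (((A \ B) ∩ (X ∩ Y)) ∪ (B ∩ (X ∩ Y))).ncard :=
          Set.ncard_union_le _ _
        _ ≤ _ := by
          have := Set.ncard_union_le ((A \ B) ∩ (X ∩ Y)) (B ∩ (X ∩ Y))
          omega
    omega

lemma H5 (hconn : KConn G k) (hk : 3 * k ≤ 2 * G.minDegree + 1)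
    (hAB : IsSepn G A B) (hSk : (A ∩ B).ncard = k) (hCne : (A \ B).Nonempty)
    (hXY : IsSepn G X Y) (hTk : (X ∩ Y).ncard = k)
    (huA : u ∈ A) (huX : u ∈ X \ Y) (hvA : v ∈ A) (hvY : v ∈ Y \ X)
    (hQ1e : (A \ B) ∩ (X \ Y) = ∅) (hQ2e : (A \ B) ∩ (Y \ X) = ∅) : False := by
  classical
  have hCsub : A \ B ⊆ X ∩ Y := by
    intro z hz
    have h1 : z ∉ X \ Y := fun h => (Set.eq_empty_iff_forall_notMem.1 hQ1e z) ⟨hz, h⟩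
    have h2 : z ∉ Y \ X := fun h => (Set.eq_empty_iff_forall_notMem.1 hQ2e z) ⟨hz, h⟩
    have h5 := (Set.mem_union z X Y).mp (by rw [hXY.1]; trivial)
    simp only [Set.mem_diff, not_and, not_not] at h1 h2
    rcases h5 with h | h
    · exact ⟨h, h1 h⟩
    · exact ⟨h2 h, h⟩
  obtain ⟨x, hx⟩ := hCne
  have hc : G.minDegree + 1 ≤ k + (A \ B).ncard := by
    have hdeg : G.minDegree + 1 ≤ A.ncard :=
      deg_bound hx.1 (fun y hy => nbr_mem_left hAB hx hy)
    have hnA := Set.ncard_inter_add_ncard_diff_eq_ncard A B (Set.toFinite _)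
    rw [hSk] at hnA
    omega
  have hxy : G.minDegree + 1 ≤ k + (X \ Y).ncard := by
    have hdeg : G.minDegree + 1 ≤ X.ncard :=
      deg_bound huX.1 (fun y hy => nbr_mem_left hXY huX hy)
    have hnX := Set.ncard_inter_add_ncard_diff_eq_ncard X Y (Set.toFinite _)
    rw [hTk] at hnX
    omega
  have hyx : G.minDegree + 1 ≤ k + (Y \ X).ncard := by
    have hdeg : G.minDegree + 1 ≤ Y.ncard :=
      deg_bound hvY.1 (fun y hy => nbr_mem_left (sep_symm hXY) hvY hy)
    have hnY := Set.ncard_inter_add_ncard_diff_eq_ncard Y X (Set.toFinite _)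
    rw [Set.inter_comm, hTk] at hnY
    omega
  have hYX : IsSepn G Y X := sep_symm hXY
  -- helper facts depending on emptiness of Q3 / Q4
  have hP4small : ((B \ A) ∩ (Y \ X)).Nonempty →
      (A \ B).ncard + ((A ∩ B) ∩ X).ncard ≤ k := by
    rintro ⟨z4, hz4⟩
    have hP4 : IsSepn G (B ∩ Y) (A ∪ X) := corner_sep (sep_symm hAB) (sep_symm hXY)
    have hP4s : (B ∩ Y) \ (A ∪ X) = (B \ A) ∩ (Y \ X) := by
      ext z; simp only [Set.mem_diff, Set.mem_inter_iff, Set.mem_union, not_or]; tauto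
    have hP4b : u ∈ (A ∪ X) \ (B ∩ Y) := ⟨Or.inl huA, fun hz => huX.2 hz.2⟩
    have h4 := order_ge hconn hP4 (by rw [hP4s]; exact ⟨z4, hz4⟩) ⟨u, hP4b⟩
    have hid1 := corner_id hAB.1 hXY.1
    rw [Set.inter_comm (B ∩ Y) (A ∪ X)] at h4
    have hAXle : ((A ∩ X) ∩ (B ∪ Y)).ncard ≤ k := by omega
    have eAX : (A ∩ X) ∩ (B ∪ Y) = A ∩ X := by
      apply Set.inter_eq_self_of_subset_left
      rintro z ⟨hzA, hzX⟩
      by_cases hzB : z ∈ B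
      · exact Or.inl hzB
      · exact Or.inr (hCsub ⟨hzA, hzB⟩).2
    rw [eAX] at hAXle
    have nAX : (A ∩ X).ncard = (A \ B).ncard + ((A ∩ B) ∩ X).ncard := by
      have e : A ∩ X = (A \ B) ∪ ((A ∩ B) ∩ X) := by
        ext z
        simp only [Set.mem_inter_iff, Set.mem_union, Set.mem_diff]
        constructor
        · rintro ⟨hzA, hzX⟩
          by_cases hzB : z ∈ B
          · exact Or.inr ⟨⟨hzA, hzB⟩, hzX⟩
          · exact Or.inl ⟨hzA, hzB⟩
        · rintro (hz | hz)
          · exact ⟨hz.1, (hCsub hz).1⟩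
          · exact ⟨hz.1.1, hz.2⟩
      rw [e]
      exact Set.ncard_union_eq (by
        rw [Set.disjoint_left]
        rintro z hz1 hz2
        exact hz1.2 hz2.1.2) (Set.toFinite _) (Set.toFinite _)
    omega
  have hP3small : ((B \ A) ∩ (X \ Y)).Nonempty →
      (A \ B).ncard + ((A ∩ B) ∩ Y).ncard ≤ k := by
    rintro ⟨z3, hz3⟩
    have hP3 : IsSepn G (B ∩ X) (A ∪ Y) := corner_sep (sep_symm hAB) hXY
    have hP3s : (B ∩ X) \ (A ∪ Y) = (B \ A) ∩ (X \ Y) := by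
      ext z; simp only [Set.mem_diff, Set.mem_inter_iff, Set.mem_union, not_or]; tauto
    have hP3b : v ∈ (A ∪ Y) \ (B ∩ X) := ⟨Or.inl hvA, fun hz => hvY.2 hz.2⟩
    have h3 := order_ge hconn hP3 (by rw [hP3s]; exact ⟨z3, hz3⟩) ⟨v, hP3b⟩
    have hid2 := corner_id hAB.1 hYX.1
    rw [Set.inter_comm (B ∩ X) (A ∪ Y)] at h3
    rw [Set.inter_comm Y X] at hid2
    have hAYle : ((A ∩ Y) ∩ (B ∪ X)).ncard ≤ k := by omega
    have eAY : (A ∩ Y) ∩ (B ∪ X) = A ∩ Y := by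
      apply Set.inter_eq_self_of_subset_left
      rintro z ⟨hzA, hzY⟩
      by_cases hzB : z ∈ B
      · exact Or.inl hzB
      · exact Or.inr (hCsub ⟨hzA, hzB⟩).1
    rw [eAY] at hAYle
    have nAY : (A ∩ Y).ncard = (A \ B).ncard + ((A ∩ B) ∩ Y).ncard := by
      have e : A ∩ Y = (A \ B) ∪ ((A ∩ B) ∩ Y) := by
        ext z
        simp only [Set.mem_inter_iff, Set.mem_union, Set.mem_diff]
        constructor
        · rintro ⟨hzA, hzY⟩
          by_cases hzB : z ∈ B
          · exact Or.inr ⟨⟨hzA, hzB⟩, hzY⟩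
          · exact Or.inl ⟨hzA, hzB⟩
        · rintro (hz | hz)
          · exact ⟨hz.1, (hCsub hz).2⟩
          · exact ⟨hz.1.1, hz.2⟩
      rw [e]
      exact Set.ncard_union_eq (by
        rw [Set.disjoint_left]
        rintro z hz1 hz2
        exact hz1.2 hz2.1.2) (Set.toFinite _) (Set.toFinite _)
    omega
  by_cases hQ4 : ((B \ A) ∩ (Y \ X)).Nonempty
  · have h4 := hP4small hQ4
    by_cases hQ3 : ((B \ A) ∩ (X \ Y)).Nonempty
    · have h3 := hP3small hQ3
      have nS : (A ∩ B).ncard ≤ ((A ∩ B) ∩ X).ncard + ((A ∩ B) ∩ Y).ncard := by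
        calc (A ∩ B).ncard ≤ (((A ∩ B) ∩ X) ∪ ((A ∩ B) ∩ Y)).ncard := by
              apply Set.ncard_le_ncard ?_ (Set.toFinite _)
              intro z hz
              rcases (Set.mem_union z X Y).mp (by rw [hXY.1]; trivial) with h | h
              · exact Or.inl ⟨hz, h⟩
              · exact Or.inr ⟨hz, h⟩
          _ ≤ _ := Set.ncard_union_le _ _
      omega
    · -- Q3 empty: X \ Y ⊆ A ∩ B
      have hXsubS : X \ Y ⊆ (A ∩ B) ∩ X := by
        intro z hz
        have h1 : z ∉ A \ B := fun h => (Set.eq_empty_iff_forall_notMem.1 hQ1e z) ⟨h, hz⟩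
        have h3 : z ∉ B \ A := fun h => hQ3 ⟨z, h, hz⟩
        have h5 := (Set.mem_union z A B).mp (by rw [hAB.1]; trivial)
        simp only [Set.mem_diff, not_and, not_not] at h1 h3
        rcases h5 with h | h
        · exact ⟨⟨h, h1 h⟩, hz.1⟩
        · exact ⟨⟨h3 h, h⟩, hz.1⟩
      have := Set.ncard_le_ncard hXsubS (Set.toFinite _)
      omega
  · by_cases hQ3 : ((B \ A) ∩ (X \ Y)).Nonempty
    · have h3 := hP3small hQ3
      have hYsubS : Y \ X ⊆ (A ∩ B) ∩ Y := by
        intro z hz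
        have h2 : z ∉ A \ B := fun h => (Set.eq_empty_iff_forall_notMem.1 hQ2e z) ⟨h, hz⟩
        have h4 : z ∉ B \ A := fun h => hQ4 ⟨z, h, hz⟩
        have h5 := (Set.mem_union z A B).mp (by rw [hAB.1]; trivial)
        simp only [Set.mem_diff, not_and, not_not] at h2 h4
        rcases h5 with h | h
        · exact ⟨⟨h, h2 h⟩, hz.1⟩
        · exact ⟨⟨h4 h, h⟩, hz.1⟩
      have := Set.ncard_le_ncard hYsubS (Set.toFinite _)
      omega
    · -- both empty : X\Y and Y\X inside A∩B
      have hXsubS : X \ Y ⊆ A ∩ B := by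
        intro z hz
        have h1 : z ∉ A \ B := fun h => (Set.eq_empty_iff_forall_notMem.1 hQ1e z) ⟨h, hz⟩
        have h3 : z ∉ B \ A := fun h => hQ3 ⟨z, h, hz⟩
        have h5 := (Set.mem_union z A B).mp (by rw [hAB.1]; trivial)
        simp only [Set.mem_diff, not_and, not_not] at h1 h3
        rcases h5 with h | h
        · exact ⟨h, h1 h⟩
        · exact ⟨h3 h, h⟩
      have hYsubS : Y \ X ⊆ A ∩ B := by
        intro z hz
        have h2 : z ∉ A \ B := fun h => (Set.eq_empty_iff_forall_notMem.1 hQ2e z) ⟨h, hz⟩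
        have h4 : z ∉ B \ A := fun h => hQ4 ⟨z, h, hz⟩
        have h5 := (Set.mem_union z A B).mp (by rw [hAB.1]; trivial)
        simp only [Set.mem_diff, not_and, not_not] at h2 h4
        rcases h5 with h | h
        · exact ⟨h, h2 h⟩
        · exact ⟨h4 h, h⟩
      have hsum : (X \ Y).ncard + (Y \ X).ncard ≤ k := by
        rw [← hSk]
        calc (X \ Y).ncard + (Y \ X).ncard = ((X \ Y) ∪ (Y \ X)).ncard := by
              refine (Set.ncard_union_eq ?_ (Set.toFinite _) (Set.toFinite _)).symm
              rw [Set.disjoint_left]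
              rintro z hz1 hz2
              exact hz1.2 hz2.1
          _ ≤ (A ∩ B).ncard := Set.ncard_le_ncard (by
              rintro z (hz | hz)
              · exact hXsubS hz
              · exact hYsubS hz) (Set.toFinite _)
      omega

lemma core (hconn : KConn G k) (hk : 3 * k ≤ 2 * G.minDegree + 1)
    (hW : Insep G k W) (hWc : W.Nonempty → G.minDegree + 1 ≤ W.ncard)
    (hAB : IsSepn G A B) (hCne : (A \ B).Nonempty) (hDne : (B \ A).Nonempty)
    (hord : (A ∩ B).ncard ≤ k) (hdisj : (A \ B) ∩ W = ∅)
    (hmin : ∀ X' Y' : Set V, IsSepn G X' Y' → (X' \ Y').Nonempty → (Y' \ X').Nonempty →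
      (X' ∩ Y').ncard ≤ k → ((X' \ Y') ∩ W) = ∅ → (A \ B).ncard ≤ (X' \ Y').ncard) :
    Insep G k A := by
  classical
  intro T₀ hT₀ u hu v hv hsb
  have hSk : (A ∩ B).ncard = k := le_antisymm hord (order_ge hconn hAB hCne hDne)
  obtain ⟨X, Y, hXY, huX, hvY, hsub⟩ := sep_of_sepBy hsb
  have hTle : (X ∩ Y).ncard ≤ k :=
    le_trans (Set.ncard_le_ncard hsub (Set.toFinite _))
      (by rw [Set.ncard_coe_finset]; exact hT₀)
  have hTk : (X ∩ Y).ncard = k :=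
    le_antisymm hTle (order_ge hconn hXY ⟨u, huX⟩ ⟨v, hvY⟩)
  have hTk' : (Y ∩ X).ncard = k := by rw [Set.inter_comm]; exact hTk
  by_cases hQ1 : ((A \ B) ∩ (X \ Y)).Nonempty
  · by_cases hQ2 : ((A \ B) ∩ (Y \ X)).Nonempty
    · by_cases hQ4 : ((B \ A) ∩ (Y \ X)).Nonempty
      · exact H1 hconn hAB hSk hmin hdisj hXY hTk hv hvY huX hQ1 hQ4
      · by_cases hQ3 : ((B \ A) ∩ (X \ Y)).Nonempty
        · exact H1 hconn hAB hSk hmin hdisj (sep_symm hXY) hTk' hu huX hvY hQ2 hQ3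
        · exact H4 hconn hk hAB hSk hmin hdisj hDne hXY hTk hvY huX hQ1 hQ2
            (Set.not_nonempty_iff_eq_empty.1 hQ3) (Set.not_nonempty_iff_eq_empty.1 hQ4)
    · by_cases hQ4 : ((B \ A) ∩ (Y \ X)).Nonempty
      · exact H1 hconn hAB hSk hmin hdisj hXY hTk hv hvY huX hQ1 hQ4
      · exact H3 hconn hk hW hWc hAB hSk hmin hdisj hDne hXY hTk hv hvY huX hQ1
          (Set.not_nonempty_iff_eq_empty.1 hQ2) (Set.not_nonempty_iff_eq_empty.1 hQ4)
  · by_cases hQ2 : ((A \ B) ∩ (Y \ X)).Nonempty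
    · by_cases hQ3 : ((B \ A) ∩ (X \ Y)).Nonempty
      · exact H1 hconn hAB hSk hmin hdisj (sep_symm hXY) hTk' hu huX hvY hQ2 hQ3
      · exact H3 hconn hk hW hWc hAB hSk hmin hdisj hDne (sep_symm hXY) hTk' hu huX hvY hQ2
          (Set.not_nonempty_iff_eq_empty.1 hQ1) (Set.not_nonempty_iff_eq_empty.1 hQ3)
    · exact H5 hconn hk hAB hSk hCne hXY hTk hu huX hv hvY
        (Set.not_nonempty_iff_eq_empty.1 hQ1) (Set.not_nonempty_iff_eq_empty.1 hQ2)

lemma block_of (hconn : KConn G k) (hk : 3 * k ≤ 2 * G.minDegree + 1)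
    (hW : Insep G k W) (hWc : W.Nonempty → G.minDegree + 1 ≤ W.ncard)
    (hAB : IsSepn G A B) (hCne : (A \ B).Nonempty) (hDne : (B \ A).Nonempty)
    (hord : (A ∩ B).ncard ≤ k) (hdisj : (A \ B) ∩ W = ∅)
    (hmin : ∀ X' Y' : Set V, IsSepn G X' Y' → (X' \ Y').Nonempty → (Y' \ X').Nonempty →
      (X' ∩ Y').ncard ≤ k → ((X' \ Y') ∩ W) = ∅ → (A \ B).ncard ≤ (X' \ Y').ncard) :
    IsBlockN G (k + 1) A ∧ G.minDegree + 1 ≤ A.ncard := by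
  classical
  have hins : Insep G k A := core hconn hk hW hWc hAB hCne hDne hord hdisj hmin
  have hSk : (A ∩ B).ncard = k := le_antisymm hord (order_ge hconn hAB hCne hDne)
  obtain ⟨x, hx⟩ := hCne
  have hAcard : G.minDegree + 1 ≤ A.ncard :=
    deg_bound hx.1 (fun y hy => nbr_mem_left hAB hx hy)
  refine ⟨⟨by omega, by simpa using hins, ?_⟩, hAcard⟩
  intro B' hsubB' hinsB'
  have hinsB'' : Insep G k B' := by simpa using hinsB'
  by_contra hne
  have hwex : ∃ w, w ∈ B' ∧ w ∉ A := by
    by_contra h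
    push_neg at h
    exact hne (Set.Subset.antisymm h hsubB')
  obtain ⟨w, hwB', hwA⟩ := hwex
  have hwD : w ∈ B \ A := ⟨mem_of_cover hAB.1 hwA, hwA⟩
  have h2 := hinsB'' (A ∩ B).toFinset (by rw [← Set.ncard_eq_toFinset_card']; omega)
    x (hsubB' hx.1) w hwB'
  rw [Set.coe_toFinset] at h2
  exact h2 (sepBy_of_sep hAB hx hwD)

lemma exists_min (P : ℕ → Prop) (h : ∃ n, P n) : ∃ n, P n ∧ ∀ m, P m → n ≤ m := by
  classical
  exact ⟨Nat.find h, Nat.find_spec h, fun m hm => Nat.find_min' h hm⟩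

end Helpers

end BlockProof

theorem stmt5 [Fintype V] [Nonempty V] (G : SimpleGraph V) [DecidableRel G.Adj]
    (k : ℕ) (hconn : KConn G k)
    (hδ : (3 : ℝ) / 2 * k - 1 < (G.minDegree : ℝ)) :
    IsBlockN G (k + 1) Set.univ ∨
      ∃ B₁ B₂ : Set V, B₁ ≠ B₂ ∧ IsBlockN G (k + 1) B₁ ∧ IsBlockN G (k + 1) B₂ ∧
        G.minDegree + 1 ≤ B₁.ncard ∧ G.minDegree + 1 ≤ B₂.ncard := by
  classical
  open BlockProof in
  have hk : 3 * k ≤ 2 * G.minDegree + 1 := by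
    have h3 : (3 : ℝ) * k < 2 * G.minDegree + 2 := by linarith
    have h4 : 3 * k < 2 * G.minDegree + 2 := by exact_mod_cast h3
    omega
  by_cases hU : Insep G k Set.univ
  · left
    refine ⟨?_, by simpa using hU, fun B' hsub _ => Set.univ_subset_iff.mp hsub⟩
    rw [Set.ncard_univ, Nat.card_eq_fintype_card]
    exact hconn.1
  · right
    rw [Insep] at hU
    push_neg at hU
    obtain ⟨S₀, hS₀, u, hu, v, hv, hsb⟩ := hU
    obtain ⟨A₀, B₀, hAB₀, hu₀, hv₀, hsub₀⟩ := BlockProof.sep_of_sepBy hsb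
    have hord₀ : (A₀ ∩ B₀).ncard ≤ k :=
      le_trans (Set.ncard_le_ncard hsub₀ (Set.toFinite _))
        (by rw [Set.ncard_coe_finset]; exact hS₀)
    -- first family: W = ∅
    obtain ⟨n₁, ⟨A₁, B₁, hAB₁, hC₁, hD₁, hordle₁, hdisj₁, hn₁⟩, hmin₁⟩ :=
      BlockProof.exists_min (fun n => ∃ A B : Set V, IsSepn G A B ∧ (A \ B).Nonempty ∧
        (B \ A).Nonempty ∧ (A ∩ B).ncard ≤ k ∧ (A \ B) ∩ (∅ : Set V) = ∅ ∧ (A \ B).ncard = n)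
        ⟨_, A₀, B₀, hAB₀, ⟨u, hu₀⟩, ⟨v, hv₀⟩, hord₀, by simp, rfl⟩
    have hmin₁' : ∀ X' Y' : Set V, IsSepn G X' Y' → (X' \ Y').Nonempty → (Y' \ X').Nonempty →
        (X' ∩ Y').ncard ≤ k → ((X' \ Y') ∩ (∅ : Set V)) = ∅ → (A₁ \ B₁).ncard ≤ (X' \ Y').ncard := by
      intro X' Y' h1 h2 h3 h4 h5
      rw [hn₁]
      exact hmin₁ _ ⟨X', Y', h1, h2, h3, h4, h5, rfl⟩
    have hWemp : Insep G k (∅ : Set V) := by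
      intro S hS a ha
      exact absurd ha (Set.notMem_empty a)
    have hblock₁ := BlockProof.block_of hconn hk hWemp
      (fun h => absurd h (Set.not_nonempty_empty)) hAB₁ hC₁ hD₁ hordle₁ hdisj₁ hmin₁'
    -- second family: W = A₁
    have hd₂ : (B₁ \ A₁) ∩ A₁ = ∅ := by
      apply Set.eq_empty_iff_forall_notMem.2
      rintro z ⟨hz1, hz2⟩
      exact hz1.2 hz2
    obtain ⟨n₂, ⟨A₂, B₂, hAB₂, hC₂, hD₂, hordle₂, hdisj₂, hn₂⟩, hmin₂⟩ :=
      BlockProof.exists_min (fun n => ∃ A B : Set V, IsSepn G A B ∧ (A \ B).Nonempty ∧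
        (B \ A).Nonempty ∧ (A ∩ B).ncard ≤ k ∧ (A \ B) ∩ A₁ = ∅ ∧ (A \ B).ncard = n)
        ⟨_, B₁, A₁, BlockProof.sep_symm hAB₁, hD₁, hC₁,
          (by rw [Set.inter_comm]; exact hordle₁), hd₂, rfl⟩
    have hmin₂' : ∀ X' Y' : Set V, IsSepn G X' Y' → (X' \ Y').Nonempty → (Y' \ X').Nonempty →
        (X' ∩ Y').ncard ≤ k → ((X' \ Y') ∩ A₁) = ∅ → (A₂ \ B₂).ncard ≤ (X' \ Y').ncard := by
      intro X' Y' h1 h2 h3 h4 h5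
      rw [hn₂]
      exact hmin₂ _ ⟨X', Y', h1, h2, h3, h4, h5, rfl⟩
    have hins₁ : Insep G k A₁ := by simpa using hblock₁.1.2.1
    have hblock₂ := BlockProof.block_of hconn hk hins₁ (fun _ => hblock₁.2)
      hAB₂ hC₂ hD₂ hordle₂ hdisj₂ hmin₂'
    refine ⟨A₁, A₂, ?_, hblock₁.1, hblock₂.1, hblock₁.2, hblock₂.2⟩
    obtain ⟨z, hz⟩ := hC₂
    intro heq
    have hzA₁ : z ∉ A₁ := fun h => (Set.eq_empty_iff_forall_notMem.1 hdisj₂ z) ⟨hz, h⟩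
    exact hzA₁ (heq ▸ hz.1)
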